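/- Let f₁,…,f₁₀ be the ten quintics of the classifying map, in the stated order. For all s, t, u ∈ ℂ, at the point (s, s, t, u, s) ∈ ℂ⁵ one has f₂ = f₅ = f₆ = f₇ = f₈ = f₉ = 0, f₃ = f₁, f₄ = f₁ and f₁₀ = −f₁, where f₁(s,s,t,u,s) = s(s²−t²)(u²−s²). Hence the entire plane γ = {(s:s:t:u:s)} ⊂ ℙ⁴ is mapped by Φ to the single point (1:0:1:1:0:0:0:0:0:−1) ∈ ℙ⁹. -/
import Mathlib


/-- The ten quintics `f₁,…,f₁₀` giving the classifying map `Φ : ℙ⁴ ⇢ ℙ⁹`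
(indices 0-based: `v 0 = x₁, …, v 4 = x₅`). -/
def quintics {R : Type*} [CommRing R] (v : Fin 5 → R) : Fin 10 → R :=
  ![v 0 * (v 1 ^ 2 - v 2 ^ 2) * (v 3 ^ 2 - v 4 ^ 2),
    v 0 * (v 1 ^ 2 - v 4 ^ 2) * (v 2 ^ 2 - v 3 ^ 2),
    v 1 * (v 0 ^ 2 - v 2 ^ 2) * (v 3 ^ 2 - v 4 ^ 2),
    v 1 * (v 0 ^ 2 - v 3 ^ 2) * (v 2 ^ 2 - v 4 ^ 2),
    v 2 * (v 0 ^ 2 - v 1 ^ 2) * (v 3 ^ 2 - v 4 ^ 2),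
    v 2 * (v 0 ^ 2 - v 3 ^ 2) * (v 1 ^ 2 - v 4 ^ 2),
    v 3 * (v 0 ^ 2 - v 1 ^ 2) * (v 2 ^ 2 - v 4 ^ 2),
    v 3 * (v 0 ^ 2 - v 2 ^ 2) * (v 1 ^ 2 - v 4 ^ 2),
    v 4 * (v 0 ^ 2 - v 1 ^ 2) * (v 2 ^ 2 - v 3 ^ 2),
    v 4 * (v 0 ^ 2 - v 3 ^ 2) * (v 1 ^ 2 - v 2 ^ 2)]

/-- On the plane `γ = {(s:s:t:u:s)}`: the quintics satisfy
`f₂ = f₅ = f₆ = f₇ = f₈ = f₉ = 0`, `f₃ = f₄ = f₁`, `f₁₀ = −f₁` and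
`f₁ = s(s²−t²)(u²−s²)`; hence `Φ` maps the whole plane `γ` to the cusp
`(1:0:1:1:0:0:0:0:0:−1) ∈ ℙ⁹`. -/
theorem plane_gamma_to_cusp (s t u : ℂ) :
    quintics ![s, s, t, u, s] 1 = 0 ∧
    quintics ![s, s, t, u, s] 4 = 0 ∧
    quintics ![s, s, t, u, s] 5 = 0 ∧
    quintics ![s, s, t, u, s] 6 = 0 ∧
    quintics ![s, s, t, u, s] 7 = 0 ∧
    quintics ![s, s, t, u, s] 8 = 0 ∧
    quintics ![s, s, t, u, s] 2 = quintics ![s, s, t, u, s] 0 ∧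
    quintics ![s, s, t, u, s] 3 = quintics ![s, s, t, u, s] 0 ∧
    quintics ![s, s, t, u, s] 9 = -quintics ![s, s, t, u, s] 0 ∧
    quintics ![s, s, t, u, s] 0 = s * (s ^ 2 - t ^ 2) * (u ^ 2 - s ^ 2) := by
  simp [quintics]; ring_nf; tauto
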